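/- arXiv:2002.06476 — 4 statements merged into one kernel-verified Lean document; each statement's English description precedes it below -/
import Mathlib

section
/- (Theorem 1 of the paper.) Let Φ and Ω be finite nonempty strategy sets, L : Φ × Ω → ℝ, and let (p*, q*) be a fully mixed Nash equilibrium of the associated zero-sum game. Let p : ℝ → Φ → ℝ and q : ℝ → Ω → ℝ be differentiable curves such that for all t: p(t,φ) > 0, q(t,ω) > 0, Σ_φ p(t,φ) = 1, Σ_ω q(t,ω) = 1, and they satisfy the replicator dynamics d/dt p(t,φ) = p(t,φ)·(u_π(t,φ) − Σ_{φ'} p(t,φ')u_π(t,φ')) and d/dt q(t,ω) = q(t,ω)·(u_D(t,ω) − Σ_{ω'} q(t,ω')u_D(t,ω')), where u_π(t,φ) = Σ_ω q(t,ω)L(φ,ω) and u_D(t,ω) = −Σ_φ p(t,φ)L(φ,ω). Then the cross entropy H(t) = −Σ_φ p*(φ)·ln p(t,φ) − Σ_ω q*(ω)·ln q(t,ω) is constant in t; equivalently, its derivative is identically zero. -/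
open Finset

/-- A mixed strategy on a finite strategy set: nonnegative weights summing to 1. -/
def IsMixed {Φ : Type*} [Fintype Φ] (p : Φ → ℝ) : Prop :=
  (∀ φ, 0 ≤ p φ) ∧ ∑ φ, p φ = 1

/-- Expected payoff of the zero-sum game with payoff `L` under mixed strategies `p, q`. -/
def expPay {Φ Ω : Type*} [Fintype Φ] [Fintype Ω] (L : Φ → Ω → ℝ)
    (p : Φ → ℝ) (q : Ω → ℝ) : ℝ :=
  ∑ φ, ∑ ω, p φ * q ω * L φ ω

lemma weighted_eq_of_le {ι : Type*} [Fintype ι] (w f : ι → ℝ) (V : ℝ)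
    (hw : ∀ i, 0 < w i) (hf : ∀ i, V ≤ f i)
    (hsum : ∑ i, w i * f i = ∑ i, w i * V) : ∀ i, f i = V := by
  have h0 : ∑ i, w i * (f i - V) = 0 := by
    rw [← sub_eq_zero] at hsum
    rw [← hsum, ← Finset.sum_sub_distrib]
    exact Finset.sum_congr rfl fun i _ => by ring
  intro i
  have := (Finset.sum_eq_zero_iff_of_nonneg (fun j _ =>
    mul_nonneg (hw j).le (sub_nonneg.2 (hf j)))).1 h0 i (Finset.mem_univ i)
  rcases mul_eq_zero.1 this with h | h
  · exact absurd h (hw i).ne'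
  · linarith [sub_eq_zero.1 h]

lemma weighted_eq_of_ge {ι : Type*} [Fintype ι] (w f : ι → ℝ) (V : ℝ)
    (hw : ∀ i, 0 < w i) (hf : ∀ i, f i ≤ V)
    (hsum : ∑ i, w i * f i = ∑ i, w i * V) : ∀ i, f i = V := by
  intro i
  have := weighted_eq_of_le w (fun j => -(f j)) (-V) hw (fun j => neg_le_neg (hf j))
    (by simpa [mul_neg, Finset.sum_neg_distrib] using congrArg Neg.neg hsum) i
  linarith
/-- Theorem 1: along any positive solution of the (continuous-time multiplicative weights,
i.e. replicator) dynamics of a finite zero-sum game with fully mixed Nash equilibrium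
`(p*, q*)`, the cross entropy
`H(t) = -∑ φ, p* φ * ln (p t φ) - ∑ ω, q* ω * ln (q t ω)` is constant in `t`;
equivalently its time derivative is identically zero. -/
theorem cross_entropy_constant_replicator
    {Φ Ω : Type*} [Fintype Φ] [Fintype Ω] [Nonempty Φ] [Nonempty Ω]
    (L : Φ → Ω → ℝ) (pstar : Φ → ℝ) (qstar : Ω → ℝ)
    (hpmix : IsMixed pstar) (hqmix : IsMixed qstar)
    (hpfull : ∀ φ, 0 < pstar φ) (hqfull : ∀ ω, 0 < qstar ω)
    (hNE₁ : ∀ p : Φ → ℝ, IsMixed p → expPay L p qstar ≤ expPay L pstar qstar)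
    (hNE₂ : ∀ q : Ω → ℝ, IsMixed q → expPay L pstar qstar ≤ expPay L pstar q)
    (p : ℝ → Φ → ℝ) (q : ℝ → Ω → ℝ)
    (hppos : ∀ t φ, 0 < p t φ) (hqpos : ∀ t ω, 0 < q t ω)
    (hpsum : ∀ t, ∑ φ, p t φ = 1) (hqsum : ∀ t, ∑ ω, q t ω = 1)
    (hpdyn : ∀ t φ, HasDerivAt (fun s => p s φ)
      (p t φ * ((∑ ω, q t ω * L φ ω) - ∑ φ', p t φ' * ∑ ω, q t ω * L φ' ω)) t)
    (hqdyn : ∀ t ω, HasDerivAt (fun s => q s ω)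
      (q t ω * ((-∑ φ, p t φ * L φ ω) - ∑ ω', q t ω' * (-∑ φ, p t φ * L φ ω'))) t) :
    (∀ t t' : ℝ,
      (-∑ φ, pstar φ * Real.log (p t φ)) - ∑ ω, qstar ω * Real.log (q t ω) =
      (-∑ φ, pstar φ * Real.log (p t' φ)) - ∑ ω, qstar ω * Real.log (q t' ω)) ∧
    (∀ t : ℝ, HasDerivAt
      (fun s => (-∑ φ, pstar φ * Real.log (p s φ)) - ∑ ω, qstar ω * Real.log (q s ω))
      0 t) := by
  classical
  set V : ℝ := expPay L pstar qstar with hV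
  -- rewrite expPay in two orders
  have hexp₁ : ∀ (a : Φ → ℝ) (b : Ω → ℝ),
      expPay L a b = ∑ φ, a φ * ∑ ω, b ω * L φ ω := by
    intro a b
    unfold expPay
    refine Finset.sum_congr rfl fun φ _ => ?_
    rw [Finset.mul_sum]
    exact Finset.sum_congr rfl fun ω _ => by ring
  have hexp₂ : ∀ (a : Φ → ℝ) (b : Ω → ℝ),
      expPay L a b = ∑ ω, b ω * ∑ φ, a φ * L φ ω := by
    intro a b
    unfold expPay
    rw [Finset.sum_comm]
    refine Finset.sum_congr rfl fun ω _ => ?_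
    rw [Finset.mul_sum]
    exact Finset.sum_congr rfl fun φ _ => by ring
  -- column values against pstar are all V
  have hcol : ∀ ω, ∑ φ, pstar φ * L φ ω = V := by
    refine weighted_eq_of_le qstar _ V hqfull ?_ ?_
    · intro ω
      have hmix : IsMixed (fun ω' => if ω' = ω then (1:ℝ) else 0) := by
        constructor
        · intro ω'; by_cases h : ω' = ω <;> simp [h]
        · simp
      have := hNE₂ _ hmix
      calc V ≤ expPay L pstar (fun ω' => if ω' = ω then (1:ℝ) else 0) := this
        _ = ∑ φ, pstar φ * L φ ω := by
            rw [hexp₂]; simp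
    · rw [← hexp₂, ← hV, ← Finset.sum_mul, hqmix.2, one_mul]
  -- row values against qstar are all V
  have hrow : ∀ φ, ∑ ω, qstar ω * L φ ω = V := by
    refine weighted_eq_of_ge pstar _ V hpfull ?_ ?_
    · intro φ
      have hmix : IsMixed (fun φ' => if φ' = φ then (1:ℝ) else 0) := by
        constructor
        · intro φ'; by_cases h : φ' = φ <;> simp [h]
        · simp
      have h := hNE₁ _ hmix
      calc ∑ ω, qstar ω * L φ ω
          = expPay L (fun φ' => if φ' = φ then (1:ℝ) else 0) qstar := by
            rw [hexp₁]; simp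
        _ ≤ V := h
    · rw [← hexp₁, ← hV, ← Finset.sum_mul, hpmix.2, one_mul]
  -- derivative of H is zero
  have hderiv : ∀ t, HasDerivAt
      (fun s => (-∑ φ, pstar φ * Real.log (p s φ)) - ∑ ω, qstar ω * Real.log (q s ω)) 0 t := by
    intro t
    set E := ∑ φ', p t φ' * ∑ ω, q t ω * L φ' ω with hE
    set F := ∑ ω', q t ω' * (-∑ φ, p t φ * L φ ω') with hF
    have hlogp : ∀ φ, HasDerivAt (fun s => Real.log (p s φ))
        ((∑ ω, q t ω * L φ ω) - E) t := by
      intro φ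
      have h := (hpdyn t φ).log (hppos t φ).ne'
      rwa [mul_div_cancel_left₀ _ (hppos t φ).ne'] at h
    have hlogq : ∀ ω, HasDerivAt (fun s => Real.log (q s ω))
        ((-∑ φ, p t φ * L φ ω) - F) t := by
      intro ω
      have h := (hqdyn t ω).log (hqpos t ω).ne'
      rwa [mul_div_cancel_left₀ _ (hqpos t ω).ne'] at h
    have hsum1 : HasDerivAt (fun s => ∑ φ, pstar φ * Real.log (p s φ))
        (∑ φ, pstar φ * ((∑ ω, q t ω * L φ ω) - E)) t :=
      HasDerivAt.fun_sum fun φ _ => (hlogp φ).const_mul (pstar φ)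
    have hsum2 : HasDerivAt (fun s => ∑ ω, qstar ω * Real.log (q s ω))
        (∑ ω, qstar ω * ((-∑ φ, p t φ * L φ ω) - F)) t :=
      HasDerivAt.fun_sum fun ω _ => (hlogq ω).const_mul (qstar ω)
    have hD := (hsum1.fun_neg).fun_sub hsum2
    refine hD.congr_deriv ?_
    -- now show the derivative value is 0
    have hEeq : E = expPay L (p t) (q t) := (hexp₁ (p t) (q t)).symm
    have hFeq : F = -E := by
      rw [hEeq, hF, hexp₂]
      simp [mul_neg, Finset.sum_neg_distrib]
    have hA : ∑ φ, pstar φ * ∑ ω, q t ω * L φ ω = V := by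
      rw [← hexp₁, hexp₂]
      simp only [hcol]
      rw [← Finset.sum_mul, hqsum t, one_mul]
    have hB : ∑ ω, qstar ω * (-∑ φ, p t φ * L φ ω) = -V := by
      have h1 : ∑ ω, qstar ω * ∑ φ, p t φ * L φ ω = V := by
        rw [← hexp₂, hexp₁]
        simp only [hrow]
        rw [← Finset.sum_mul, hpsum t, one_mul]
      rw [← h1]
      simp [mul_neg, Finset.sum_neg_distrib]
    have e1 : ∑ φ, pstar φ * ((∑ ω, q t ω * L φ ω) - E) = V - E := by
      rw [show ∀ f g : Φ → ℝ, (∑ φ, pstar φ * (f φ - g φ)) = (∑ φ, pstar φ * f φ) - ∑ φ, pstar φ * g φ from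
        fun f g => by rw [← Finset.sum_sub_distrib]; exact Finset.sum_congr rfl fun _ _ => by ring]
      rw [hA, ← Finset.sum_mul, hpmix.2, one_mul]
    have e2 : ∑ ω, qstar ω * ((-∑ φ, p t φ * L φ ω) - F) = -V - F := by
      rw [show ∀ f g : Ω → ℝ, (∑ ω, qstar ω * (f ω - g ω)) = (∑ ω, qstar ω * f ω) - ∑ ω, qstar ω * g ω from
        fun f g => by rw [← Finset.sum_sub_distrib]; exact Finset.sum_congr rfl fun _ _ => by ring]
      rw [hB, ← Finset.sum_mul, hqmix.2, one_mul]
    rw [e1, e2, hFeq]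
    ring
  refine ⟨?_, hderiv⟩
  intro t t'
  exact is_const_of_deriv_eq_zero (fun s => (hderiv s).differentiableAt)
    (fun s => (hderiv s).deriv) t t'
end

section
/- (Corollary to Theorem 1, as used in Lemma 1 of the paper.) Under the hypotheses of Theorem 1 (finite zero-sum game L : Φ × Ω → ℝ with fully mixed Nash equilibrium (p*, q*), and differentiable positive curves p(t), q(t) of mixed strategies obeying the replicator dynamics), the total Kullback–Leibler divergence D(t) = Σ_φ p*(φ)·ln(p*(φ)/p(t,φ)) + Σ_ω q*(ω)·ln(q*(ω)/q(t,ω)) is constant in t: D(t) = D(0) for all t ∈ ℝ. -/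
open Finset

/-- Each pure strategy of the maximizer achieves the value against `qstar`. -/
lemma pure_row_eq_value {Φ Ω : Type*} [Fintype Φ] [Fintype Ω]
    (L : Φ → Ω → ℝ) (pstar : Φ → ℝ) (qstar : Ω → ℝ)
    (hpmix : IsMixed pstar) (hpfull : ∀ φ, 0 < pstar φ)
    (hNE₁ : ∀ p : Φ → ℝ, IsMixed p → expPay L p qstar ≤ expPay L pstar qstar) :
    ∀ φ, ∑ ω, qstar ω * L φ ω = expPay L pstar qstar := by
  classical
  set v := expPay L pstar qstar with hv
  have hle : ∀ φ, ∑ ω, qstar ω * L φ ω ≤ v := by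
    intro φ
    have hmix : IsMixed (fun φ' => if φ' = φ then (1:ℝ) else 0) := by
      constructor
      · intro φ'; by_cases h : φ' = φ <;> simp [h]
      · simp
    have := hNE₁ _ hmix
    simpa [expPay, ite_mul, mul_comm] using this
  have hsum : ∑ φ, pstar φ * (∑ ω, qstar ω * L φ ω) = v := by
    rw [hv]
    unfold expPay
    congr 1; ext φ
    rw [Finset.mul_sum]
    congr 1; ext ω; ring
  have hzero : ∑ φ, pstar φ * (v - ∑ ω, qstar ω * L φ ω) = 0 := by
    simp only [mul_sub]
    rw [Finset.sum_sub_distrib, hsum, ← Finset.sum_mul, hpmix.2, one_mul, sub_self]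
  have hterm : ∀ φ ∈ Finset.univ, (0:ℝ) ≤ pstar φ * (v - ∑ ω, qstar ω * L φ ω) := by
    intro φ _
    exact mul_nonneg (hpmix.1 φ) (sub_nonneg.mpr (hle φ))
  intro φ
  have := (Finset.sum_eq_zero_iff_of_nonneg hterm).mp hzero φ (Finset.mem_univ φ)
  have h2 : v - ∑ ω, qstar ω * L φ ω = 0 := by
    rcases mul_eq_zero.mp this with h | h
    · exact absurd h (ne_of_gt (hpfull φ))
    · exact h
  linarith

/-- Each pure strategy of the minimizer achieves the value against `pstar`. -/
lemma pure_col_eq_value {Φ Ω : Type*} [Fintype Φ] [Fintype Ω]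
    (L : Φ → Ω → ℝ) (pstar : Φ → ℝ) (qstar : Ω → ℝ)
    (hqmix : IsMixed qstar) (hqfull : ∀ ω, 0 < qstar ω)
    (hNE₂ : ∀ q : Ω → ℝ, IsMixed q → expPay L pstar qstar ≤ expPay L pstar q) :
    ∀ ω, ∑ φ, pstar φ * L φ ω = expPay L pstar qstar := by
  classical
  set v := expPay L pstar qstar with hv
  have hge : ∀ ω, v ≤ ∑ φ, pstar φ * L φ ω := by
    intro ω
    have hmix : IsMixed (fun ω' => if ω' = ω then (1:ℝ) else 0) := by
      constructor
      · intro ω'; by_cases h : ω' = ω <;> simp [h]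
      · simp
    have := hNE₂ _ hmix
    simpa [expPay, mul_ite, ite_mul] using this
  have hsum : ∑ ω, qstar ω * (∑ φ, pstar φ * L φ ω) = v := by
    rw [hv]
    unfold expPay
    rw [Finset.sum_comm]
    congr 1; ext ω
    rw [Finset.mul_sum]
    congr 1; ext φ; ring
  have hzero : ∑ ω, qstar ω * ((∑ φ, pstar φ * L φ ω) - v) = 0 := by
    simp only [mul_sub]
    rw [Finset.sum_sub_distrib, hsum, ← Finset.sum_mul, hqmix.2, one_mul, sub_self]
  have hterm : ∀ ω ∈ Finset.univ, (0:ℝ) ≤ qstar ω * ((∑ φ, pstar φ * L φ ω) - v) := by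
    intro ω _
    exact mul_nonneg (hqmix.1 ω) (sub_nonneg.mpr (hge ω))
  intro ω
  have := (Finset.sum_eq_zero_iff_of_nonneg hterm).mp hzero ω (Finset.mem_univ ω)
  have h2 : (∑ φ, pstar φ * L φ ω) - v = 0 := by
    rcases mul_eq_zero.mp this with h | h
    · exact absurd h (ne_of_gt (hqfull ω))
    · exact h
  linarith

/-- Corollary to Theorem 1 (as used in Lemma 1): along positive replicator-dynamics
solutions of a finite zero-sum game with fully mixed Nash equilibrium `(p*, q*)`, the
total KL divergence
`D(t) = ∑ φ, p* φ * ln (p* φ / p t φ) + ∑ ω, q* ω * ln (q* ω / q t ω)`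
is constant: `D(t) = D(0)` for all `t`. -/
theorem kl_divergence_constant_replicator
    {Φ Ω : Type*} [Fintype Φ] [Fintype Ω] [Nonempty Φ] [Nonempty Ω]
    (L : Φ → Ω → ℝ) (pstar : Φ → ℝ) (qstar : Ω → ℝ)
    (hpmix : IsMixed pstar) (hqmix : IsMixed qstar)
    (hpfull : ∀ φ, 0 < pstar φ) (hqfull : ∀ ω, 0 < qstar ω)
    (hNE₁ : ∀ p : Φ → ℝ, IsMixed p → expPay L p qstar ≤ expPay L pstar qstar)
    (hNE₂ : ∀ q : Ω → ℝ, IsMixed q → expPay L pstar qstar ≤ expPay L pstar q)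
    (p : ℝ → Φ → ℝ) (q : ℝ → Ω → ℝ)
    (hppos : ∀ t φ, 0 < p t φ) (hqpos : ∀ t ω, 0 < q t ω)
    (hpsum : ∀ t, ∑ φ, p t φ = 1) (hqsum : ∀ t, ∑ ω, q t ω = 1)
    (hpdyn : ∀ t φ, HasDerivAt (fun s => p s φ)
      (p t φ * ((∑ ω, q t ω * L φ ω) - ∑ φ', p t φ' * ∑ ω, q t ω * L φ' ω)) t)
    (hqdyn : ∀ t ω, HasDerivAt (fun s => q s ω)
      (q t ω * ((-∑ φ, p t φ * L φ ω) - ∑ ω', q t ω' * (-∑ φ, p t φ * L φ ω'))) t) :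
    ∀ t : ℝ,
      (∑ φ, pstar φ * Real.log (pstar φ / p t φ)) +
        ∑ ω, qstar ω * Real.log (qstar ω / q t ω) =
      (∑ φ, pstar φ * Real.log (pstar φ / p 0 φ)) +
        ∑ ω, qstar ω * Real.log (qstar ω / q 0 ω) := by
  set v := expPay L pstar qstar with hv
  have hrow := pure_row_eq_value L pstar qstar hpmix hpfull hNE₁
  have hcol := pure_col_eq_value L pstar qstar hqmix hqfull hNE₂
  set D : ℝ → ℝ := fun t =>
    (∑ φ, pstar φ * Real.log (pstar φ / p t φ)) +
      ∑ ω, qstar ω * Real.log (qstar ω / q t ω) with hD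
  -- derivative of D is 0
  have hderiv : ∀ t, HasDerivAt D 0 t := by
    intro t
    -- abbreviations at time t
    set E : ℝ := ∑ φ', p t φ' * ∑ ω, q t ω * L φ' ω with hE
    have h1 : HasDerivAt (fun s => ∑ φ, pstar φ * Real.log (pstar φ / p s φ))
        (∑ φ, pstar φ * (-((∑ ω, q t ω * L φ ω) - E))) t := by
      apply HasDerivAt.fun_sum
      intro φ _
      have hne : p t φ ≠ 0 := (hppos t φ).ne'
      have hlog : HasDerivAt (fun s => Real.log (p s φ))
          ((p t φ * ((∑ ω, q t ω * L φ ω) - E)) / p t φ) t :=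
        (hpdyn t φ).log hne
      have hlog' : HasDerivAt (fun s => Real.log (p s φ))
          ((∑ ω, q t ω * L φ ω) - E) t := by
        rwa [mul_div_cancel_left₀ _ hne] at hlog
      have : HasDerivAt (fun s => pstar φ * (Real.log (pstar φ) - Real.log (p s φ)))
          (pstar φ * (0 - ((∑ ω, q t ω * L φ ω) - E))) t :=
        (((hasDerivAt_const t (Real.log (pstar φ))).sub hlog')).const_mul _
      have heq : (fun s => pstar φ * (Real.log (pstar φ) - Real.log (p s φ)))
          = fun s => pstar φ * Real.log (pstar φ / p s φ) := by
        funext s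
        rw [Real.log_div (hpfull φ).ne' (hppos s φ).ne']
      rw [heq] at this
      simpa using this
    set F : ℝ := ∑ ω', q t ω' * (-∑ φ, p t φ * L φ ω') with hF
    have h2 : HasDerivAt (fun s => ∑ ω, qstar ω * Real.log (qstar ω / q s ω))
        (∑ ω, qstar ω * (-((-∑ φ, p t φ * L φ ω) - F))) t := by
      apply HasDerivAt.fun_sum
      intro ω _
      have hne : q t ω ≠ 0 := (hqpos t ω).ne'
      have hlog : HasDerivAt (fun s => Real.log (q s ω))
          ((q t ω * ((-∑ φ, p t φ * L φ ω) - F)) / q t ω) t :=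
        (hqdyn t ω).log hne
      have hlog' : HasDerivAt (fun s => Real.log (q s ω))
          ((-∑ φ, p t φ * L φ ω) - F) t := by
        rwa [mul_div_cancel_left₀ _ hne] at hlog
      have : HasDerivAt (fun s => qstar ω * (Real.log (qstar ω) - Real.log (q s ω)))
          (qstar ω * (0 - ((-∑ φ, p t φ * L φ ω) - F))) t :=
        (((hasDerivAt_const t (Real.log (qstar ω))).sub hlog')).const_mul _
      have heq : (fun s => qstar ω * (Real.log (qstar ω) - Real.log (q s ω)))
          = fun s => qstar ω * Real.log (qstar ω / q s ω) := by
        funext s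
        rw [Real.log_div (hqfull ω).ne' (hqpos s ω).ne']
      rw [heq] at this
      simpa using this
    have hDd : HasDerivAt D
        ((∑ φ, pstar φ * (-((∑ ω, q t ω * L φ ω) - E))) +
          ∑ ω, qstar ω * (-((-∑ φ, p t φ * L φ ω) - F))) t := h1.add h2
    -- Now show the derivative expression equals 0.
    have key : (∑ φ, pstar φ * (-((∑ ω, q t ω * L φ ω) - E))) +
        (∑ ω, qstar ω * (-((-∑ φ, p t φ * L φ ω) - F))) = 0 := by
      have e1 : ∑ φ, pstar φ * (∑ ω, q t ω * L φ ω) = v := by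
        calc ∑ φ, pstar φ * (∑ ω, q t ω * L φ ω)
            = ∑ φ, ∑ ω, q t ω * (pstar φ * L φ ω) := by
              refine Finset.sum_congr rfl fun φ _ => ?_; rw [Finset.mul_sum]; refine Finset.sum_congr rfl fun ω _ => ?_; ring
          _ = ∑ ω, q t ω * ∑ φ, pstar φ * L φ ω := by
              rw [Finset.sum_comm]; refine Finset.sum_congr rfl fun ω _ => ?_; rw [Finset.mul_sum]
          _ = ∑ ω, q t ω * v := by
              refine Finset.sum_congr rfl fun ω _ => ?_; rw [hcol ω]
          _ = v := by rw [← Finset.sum_mul, hqsum t, one_mul]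
      have e2 : ∑ ω, qstar ω * (∑ φ, p t φ * L φ ω) = v := by
        calc ∑ ω, qstar ω * (∑ φ, p t φ * L φ ω)
            = ∑ ω, ∑ φ, p t φ * (qstar ω * L φ ω) := by
              refine Finset.sum_congr rfl fun ω _ => ?_; rw [Finset.mul_sum]; refine Finset.sum_congr rfl fun φ _ => ?_; ring
          _ = ∑ φ, p t φ * ∑ ω, qstar ω * L φ ω := by
              rw [Finset.sum_comm]; refine Finset.sum_congr rfl fun φ _ => ?_; rw [Finset.mul_sum]
          _ = ∑ φ, p t φ * v := by
              refine Finset.sum_congr rfl fun φ _ => ?_; rw [hrow φ]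
          _ = v := by rw [← Finset.sum_mul, hpsum t, one_mul]
      have eF : F = -E := by
        rw [hF, hE]
        calc ∑ ω', q t ω' * -∑ φ, p t φ * L φ ω'
            = -∑ ω', ∑ φ, p t φ * (q t ω' * L φ ω') := by
              rw [← Finset.sum_neg_distrib]
              refine Finset.sum_congr rfl fun ω' _ => ?_
              rw [mul_neg, Finset.mul_sum]
              congr 1
              refine Finset.sum_congr rfl fun φ _ => ?_; ring
          _ = -∑ φ, p t φ * ∑ ω, q t ω * L φ ω := by
              rw [Finset.sum_comm]
              congr 1
              refine Finset.sum_congr rfl fun φ _ => ?_; rw [Finset.mul_sum]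
      have s1 : ∑ φ, pstar φ * (-((∑ ω, q t ω * L φ ω) - E)) = -v + E := by
        have : ∀ φ, pstar φ * (-((∑ ω, q t ω * L φ ω) - E))
            = -(pstar φ * (∑ ω, q t ω * L φ ω)) + pstar φ * E := by
          intro φ; ring
        rw [Finset.sum_congr rfl (fun φ _ => this φ), Finset.sum_add_distrib,
          Finset.sum_neg_distrib, e1, ← Finset.sum_mul, hpmix.2, one_mul]
      have s2 : ∑ ω, qstar ω * (-((-∑ φ, p t φ * L φ ω) - F)) = v + F := by
        have : ∀ ω, qstar ω * (-((-∑ φ, p t φ * L φ ω) - F))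
            = qstar ω * (∑ φ, p t φ * L φ ω) + qstar ω * F := by
          intro ω; ring
        rw [Finset.sum_congr rfl (fun ω _ => this ω), Finset.sum_add_distrib,
          e2, ← Finset.sum_mul, hqmix.2, one_mul]
      rw [s1, s2, eF]; ring
    rw [key] at hDd
    exact hDd
  have hdiff : Differentiable ℝ D := fun t => (hderiv t).differentiableAt
  have hconst : ∀ t s : ℝ, D t = D s :=
    is_const_of_deriv_eq_zero hdiff (fun t => (hderiv t).deriv)
  intro t
  exact hconst t 0
end

section
/- (Non-convergence / recurrence consequence of Theorem 1.) Under the hypotheses of Theorem 1 (finite zero-sum game with fully mixed Nash equilibrium (p*, q*) and differentiable positive curves p(t), q(t) of mixed strategies obeying the replicator dynamics), if the initial divergence Σ_φ p*(φ)·ln(p*(φ)/p(0,φ)) + Σ_ω q*(ω)·ln(q*(ω)/q(0,ω)) is strictly positive, then (p(t), q(t)) does not converge to (p*, q*) as t → ∞: there is no pointwise convergence p(t,φ) → p*(φ) and q(t,ω) → q*(ω) for all φ, ω. -/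
open Finset Filter

lemma expPay_eq_left {Φ Ω : Type*} [Fintype Φ] [Fintype Ω] (L : Φ → Ω → ℝ)
    (p : Φ → ℝ) (q : Ω → ℝ) :
    expPay L p q = ∑ φ, p φ * ∑ ω, q ω * L φ ω := by
  unfold expPay
  refine Finset.sum_congr rfl fun φ _ => ?_
  rw [Finset.mul_sum]
  exact Finset.sum_congr rfl fun ω _ => by ring

lemma expPay_eq_right {Φ Ω : Type*} [Fintype Φ] [Fintype Ω] (L : Φ → Ω → ℝ)
    (p : Φ → ℝ) (q : Ω → ℝ) :
    expPay L p q = ∑ ω, q ω * ∑ φ, p φ * L φ ω := by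
  unfold expPay
  rw [Finset.sum_comm]
  refine Finset.sum_congr rfl fun ω _ => ?_
  rw [Finset.mul_sum]
  exact Finset.sum_congr rfl fun φ _ => by ring

lemma pure_isMixed {Φ : Type*} [Fintype Φ] [DecidableEq Φ] (φ0 : Φ) :
    IsMixed (fun φ => if φ = φ0 then (1:ℝ) else 0) := by
  constructor
  · intro φ; positivity
  · simp

lemma coeff_const {Φ : Type*} [Fintype Φ] (c : Φ → ℝ) (pstar : Φ → ℝ)
    (hpfull : ∀ φ, 0 < pstar φ) (hsum : ∑ φ, pstar φ = 1)
    (hmax : ∀ p : Φ → ℝ, IsMixed p → ∑ φ, p φ * c φ ≤ ∑ φ, pstar φ * c φ) :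
    ∀ φ, c φ = ∑ φ', pstar φ' * c φ' := by
  classical
  set V := ∑ φ', pstar φ' * c φ' with hV
  have hle : ∀ φ, c φ ≤ V := by
    intro φ0
    have := hmax (fun φ => if φ = φ0 then (1:ℝ) else 0) (pure_isMixed φ0)
    simpa using this
  have hzero : ∑ φ, pstar φ * (V - c φ) = 0 := by
    simp only [mul_sub, Finset.sum_sub_distrib, ← Finset.sum_mul, hsum, one_mul, hV, sub_self]
  intro φ
  have hterm : pstar φ * (V - c φ) = 0 := by
    have hnn : ∀ i ∈ Finset.univ, 0 ≤ pstar i * (V - c i) := fun i _ =>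
      mul_nonneg (hpfull i).le (sub_nonneg.mpr (hle i))
    exact (Finset.sum_eq_zero_iff_of_nonneg hnn).mp hzero φ (Finset.mem_univ φ)
  have := (mul_eq_zero.mp hterm).resolve_left (ne_of_gt (hpfull φ))
  linarith [sub_eq_zero.mp this]

lemma sum_mul_sub {ι : Type*} [Fintype ι] (w f : ι → ℝ) (hw : (∑ i, w i) = 1) (c : ℝ) :
    ∑ i, w i * (f i - c) = (∑ i, w i * f i) - c := by
  simp only [mul_sub, Finset.sum_sub_distrib, ← Finset.sum_mul, hw, one_mul]

/-- Non-convergence consequence of Theorem 1: if a positive replicator-dynamics solution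
of a finite zero-sum game starts at strictly positive KL divergence from a fully mixed
Nash equilibrium `(p*, q*)`, then it does not converge pointwise to `(p*, q*)` as
`t → ∞`. -/
theorem replicator_not_convergent_to_nash
    {Φ Ω : Type*} [Fintype Φ] [Fintype Ω] [Nonempty Φ] [Nonempty Ω]
    (L : Φ → Ω → ℝ) (pstar : Φ → ℝ) (qstar : Ω → ℝ)
    (hpmix : IsMixed pstar) (hqmix : IsMixed qstar)
    (hpfull : ∀ φ, 0 < pstar φ) (hqfull : ∀ ω, 0 < qstar ω)
    (hNE₁ : ∀ p : Φ → ℝ, IsMixed p → expPay L p qstar ≤ expPay L pstar qstar)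
    (hNE₂ : ∀ q : Ω → ℝ, IsMixed q → expPay L pstar qstar ≤ expPay L pstar q)
    (p : ℝ → Φ → ℝ) (q : ℝ → Ω → ℝ)
    (hppos : ∀ t φ, 0 < p t φ) (hqpos : ∀ t ω, 0 < q t ω)
    (hpsum : ∀ t, ∑ φ, p t φ = 1) (hqsum : ∀ t, ∑ ω, q t ω = 1)
    (hpdyn : ∀ t φ, HasDerivAt (fun s => p s φ)
      (p t φ * ((∑ ω, q t ω * L φ ω) - ∑ φ', p t φ' * ∑ ω, q t ω * L φ' ω)) t)
    (hqdyn : ∀ t ω, HasDerivAt (fun s => q s ω)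
      (q t ω * ((-∑ φ, p t φ * L φ ω) - ∑ ω', q t ω' * (-∑ φ, p t φ * L φ ω'))) t)
    (hD0 : 0 < (∑ φ, pstar φ * Real.log (pstar φ / p 0 φ)) +
        ∑ ω, qstar ω * Real.log (qstar ω / q 0 ω)) :
    ¬ ((∀ φ, Tendsto (fun t => p t φ) atTop (nhds (pstar φ))) ∧
        ∀ ω, Tendsto (fun t => q t ω) atTop (nhds (qstar ω))) := by
  classical
  rintro ⟨hconvp, hconvq⟩
  set V := expPay L pstar qstar with hVdef
  -- all coefficients of the payoff against qstar equal V
  have hVleft : V = ∑ φ, pstar φ * ∑ ω, qstar ω * L φ ω := expPay_eq_left L pstar qstar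
  have hVright : V = ∑ ω, qstar ω * ∑ φ, pstar φ * L φ ω := expPay_eq_right L pstar qstar
  have hc : ∀ φ, (∑ ω, qstar ω * L φ ω) = V := by
    intro φ
    have key := coeff_const (fun φ => ∑ ω, qstar ω * L φ ω) pstar hpfull hpmix.2
      (fun r hr => by
        show ∑ φ, r φ * ∑ ω, qstar ω * L φ ω ≤ ∑ φ, pstar φ * ∑ ω, qstar ω * L φ ω
        have := hNE₁ r hr
        rw [expPay_eq_left] at this
        rw [← hVleft]
        exact this) φ
    exact key.trans hVleft.symm
  have hd : ∀ ω, (∑ φ, pstar φ * L φ ω) = V := by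
    intro ω
    have key := coeff_const (fun ω => -(∑ φ, pstar φ * L φ ω)) qstar hqfull hqmix.2
      (fun r hr => by
        show ∑ ω, r ω * -(∑ φ, pstar φ * L φ ω) ≤ ∑ ω, qstar ω * -(∑ φ, pstar φ * L φ ω)
        have h1 := hNE₂ r hr
        rw [expPay_eq_right] at h1
        have hr' : ∑ ω, r ω * -(∑ φ, pstar φ * L φ ω)
            = -∑ ω, r ω * ∑ φ, pstar φ * L φ ω := by
          simp [Finset.sum_neg_distrib]
        have hq' : ∑ ω, qstar ω * -(∑ φ, pstar φ * L φ ω) = -V := by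
          rw [hVright]
          simp [Finset.sum_neg_distrib]
        rw [hr', hq']
        linarith) ω
    have key' : -(∑ φ, pstar φ * L φ ω) = ∑ ω', qstar ω' * -(∑ φ, pstar φ * L φ ω') := key
    rw [show (∑ ω', qstar ω' * -(∑ φ, pstar φ * L φ ω')) = -∑ ω', qstar ω' * ∑ φ, pstar φ * L φ ω'
        by simp [Finset.sum_neg_distrib], ← hVright, neg_inj] at key'
    exact key'
  -- value against qstar / of pstar is V for any mixed strategy
  have hE1 : ∀ t, ∑ φ, p t φ * ∑ ω, qstar ω * L φ ω = V := by
    intro t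
    simp only [hc, ← Finset.sum_mul, hpsum t, one_mul]
  have hE2 : ∀ t, ∑ ω, q t ω * ∑ φ, pstar φ * L φ ω = V := by
    intro t
    simp only [hd, ← Finset.sum_mul, hqsum t, one_mul]
  -- the entropy-like quantity H is constant
  set H : ℝ → ℝ := fun t => (∑ φ, pstar φ * Real.log (p t φ)) +
      ∑ ω, qstar ω * Real.log (q t ω) with hHdef
  have hH : ∀ t, HasDerivAt H 0 t := by
    intro t
    have hlogp : ∀ φ, HasDerivAt (fun s => Real.log (p s φ))
        ((∑ ω, q t ω * L φ ω) - ∑ φ', p t φ' * ∑ ω, q t ω * L φ' ω) t := by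
      intro φ
      have h := (hpdyn t φ).log (ne_of_gt (hppos t φ))
      rwa [mul_div_cancel_left₀ _ (ne_of_gt (hppos t φ))] at h
    have hlogq : ∀ ω, HasDerivAt (fun s => Real.log (q s ω))
        ((-∑ φ, p t φ * L φ ω) - ∑ ω', q t ω' * (-∑ φ, p t φ * L φ ω')) t := by
      intro ω
      have h := (hqdyn t ω).log (ne_of_gt (hqpos t ω))
      rwa [mul_div_cancel_left₀ _ (ne_of_gt (hqpos t ω))] at h
    have h1 : HasDerivAt (fun s => ∑ φ, pstar φ * Real.log (p s φ))
        (∑ φ, pstar φ * ((∑ ω, q t ω * L φ ω) - ∑ φ', p t φ' * ∑ ω, q t ω * L φ' ω)) t :=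
      HasDerivAt.fun_sum fun φ _ => (hlogp φ).const_mul (pstar φ)
    have h2 : HasDerivAt (fun s => ∑ ω, qstar ω * Real.log (q s ω))
        (∑ ω, qstar ω * ((-∑ φ, p t φ * L φ ω) - ∑ ω', q t ω' * (-∑ φ, p t φ * L φ ω'))) t :=
      HasDerivAt.fun_sum fun ω _ => (hlogq ω).const_mul (qstar ω)
    have e1 : ∑ φ, pstar φ * ∑ ω, q t ω * L φ ω = V := by
      rw [← expPay_eq_left, expPay_eq_right]; exact hE2 t
    have eE : (∑ φ', p t φ' * ∑ ω, q t ω * L φ' ω) = expPay L (p t) (q t) :=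
      (expPay_eq_left _ _ _).symm
    have e2 : ∑ ω, qstar ω * (-∑ φ, p t φ * L φ ω) = -V := by
      have : ∑ ω, qstar ω * ∑ φ, p t φ * L φ ω = V := by
        rw [← expPay_eq_right, expPay_eq_left]; exact hE1 t
      simp only [mul_neg, Finset.sum_neg_distrib, neg_inj]
      exact this
    have eB : (∑ ω', q t ω' * (-∑ φ, p t φ * L φ ω')) = -expPay L (p t) (q t) := by
      simp only [mul_neg, Finset.sum_neg_distrib, neg_inj]
      exact (expPay_eq_right _ _ _).symm
    have key : (∑ φ, pstar φ * ((∑ ω, q t ω * L φ ω) - ∑ φ', p t φ' * ∑ ω, q t ω * L φ' ω))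
        + (∑ ω, qstar ω * ((-∑ φ, p t φ * L φ ω) - ∑ ω', q t ω' * (-∑ φ, p t φ * L φ ω'))) = 0 := by
      rw [sum_mul_sub pstar _ hpmix.2, sum_mul_sub qstar _ hqmix.2, e1, eE, e2, eB]
      ring
    have := h1.add h2
    rwa [key] at this
  have hHconst : ∀ t, H t = H 0 := by
    intro t
    exact is_const_of_deriv_eq_zero (fun x => (hH x).differentiableAt) (fun x => (hH x).deriv) t 0
  -- the divergence D equals C - H t
  set D : ℝ → ℝ := fun t => (∑ φ, pstar φ * Real.log (pstar φ / p t φ)) +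
      ∑ ω, qstar ω * Real.log (qstar ω / q t ω) with hDdef
  set C : ℝ := (∑ φ, pstar φ * Real.log (pstar φ)) +
      ∑ ω, qstar ω * Real.log (qstar ω) with hCdef
  have hDC : ∀ t, D t = C - H t := by
    intro t
    have : ∀ φ, pstar φ * Real.log (pstar φ / p t φ)
        = pstar φ * Real.log (pstar φ) - pstar φ * Real.log (p t φ) := fun φ => by
      rw [Real.log_div (ne_of_gt (hpfull φ)) (ne_of_gt (hppos t φ))]; ring
    have hq' : ∀ ω, qstar ω * Real.log (qstar ω / q t ω)
        = qstar ω * Real.log (qstar ω) - qstar ω * Real.log (q t ω) := fun ω => by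
      rw [Real.log_div (ne_of_gt (hqfull ω)) (ne_of_gt (hqpos t ω))]; ring
    simp only [hDdef, hCdef, hHdef, this, hq', Finset.sum_sub_distrib]
    ring
  have hDconst : ∀ t, D t = D 0 := fun t => by rw [hDC, hDC, hHconst]
  -- but D tends to 0
  have hDto0 : Tendsto D atTop (nhds 0) := by
    have hp0 : ∀ φ, Tendsto (fun t => pstar φ * Real.log (pstar φ / p t φ)) atTop (nhds 0) := by
      intro φ
      have hdiv : Tendsto (fun t => pstar φ / p t φ) atTop (nhds 1) := by
        have h := Tendsto.div (tendsto_const_nhds : Tendsto (fun _ : ℝ => pstar φ) atTop (nhds (pstar φ)))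
          (hconvp φ) (ne_of_gt (hpfull φ))
        rwa [div_self (ne_of_gt (hpfull φ))] at h
      have hlog : Tendsto (fun t => Real.log (pstar φ / p t φ)) atTop (nhds 0) := by
        have := (Real.continuousAt_log (by norm_num : (1:ℝ) ≠ 0)).tendsto.comp hdiv
        simpa [Function.comp_def] using this
      simpa using hlog.const_mul (pstar φ)
    have hq0 : ∀ ω, Tendsto (fun t => qstar ω * Real.log (qstar ω / q t ω)) atTop (nhds 0) := by
      intro ω
      have hdiv : Tendsto (fun t => qstar ω / q t ω) atTop (nhds 1) := by
        have h := Tendsto.div (tendsto_const_nhds : Tendsto (fun _ : ℝ => qstar ω) atTop (nhds (qstar ω)))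
          (hconvq ω) (ne_of_gt (hqfull ω))
        rwa [div_self (ne_of_gt (hqfull ω))] at h
      have hlog : Tendsto (fun t => Real.log (qstar ω / q t ω)) atTop (nhds 0) := by
        have := (Real.continuousAt_log (by norm_num : (1:ℝ) ≠ 0)).tendsto.comp hdiv
        simpa [Function.comp_def] using this
      simpa using hlog.const_mul (qstar ω)
    have hs1 : Tendsto (fun t => ∑ φ, pstar φ * Real.log (pstar φ / p t φ)) atTop (nhds 0) := by
      have := tendsto_finset_sum Finset.univ (fun φ _ => hp0 φ)
      simpa using this
    have hs2 : Tendsto (fun t => ∑ ω, qstar ω * Real.log (qstar ω / q t ω)) atTop (nhds 0) := by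
      have := tendsto_finset_sum Finset.univ (fun ω _ => hq0 ω)
      simpa using this
    simpa using hs1.add hs2
  have : Tendsto D atTop (nhds (D 0)) := by
    have : D = fun _ => D 0 := funext hDconst
    rw [this]; exact tendsto_const_nhds
  have hD00 : D 0 = 0 := tendsto_nhds_unique this hDto0
  rw [hDdef] at hD00
  simp only at hD00
  linarith [hD0, hD00]
end

section
/- (KL-divergence derivative along replicator dynamics.) Let Φ be a finite nonempty set, p* : Φ → ℝ a fixed probability vector, and p : ℝ → Φ → ℝ a differentiable curve with p(t,φ) > 0 for all t, φ, satisfying d/dt p(t,φ) = p(t,φ)·(u(t,φ) − Σ_{φ'} p(t,φ')u(t,φ')) for a continuous time-dependent payoff u : ℝ × Φ → ℝ. Then d/dt [Σ_φ p*(φ)·ln(p*(φ)/p(t,φ))] = Σ_φ p(t,φ)·u(t,φ) − Σ_φ p*(φ)·u(t,φ). -/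
open Finset

/-- Derivative of the KL divergence to a fixed probability vector `p*` along the
(single-population) replicator dynamics with time-dependent payoff `u`:
`d/dt D_KL(p* ‖ p t) = ∑ φ, p t φ * u t φ - ∑ φ, p* φ * u t φ`. -/
theorem kl_deriv_along_replicator
    {Φ : Type*} [Fintype Φ] [Nonempty Φ]
    (pstar : Φ → ℝ) (hpstar_nonneg : ∀ φ, 0 ≤ pstar φ) (hpstar_sum : ∑ φ, pstar φ = 1)
    (p : ℝ → Φ → ℝ) (hppos : ∀ t φ, 0 < p t φ)
    (u : ℝ → Φ → ℝ) (hu : ∀ φ, Continuous fun t => u t φ)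
    (hdyn : ∀ t φ, HasDerivAt (fun s => p s φ)
      (p t φ * (u t φ - ∑ φ', p t φ' * u t φ')) t) :
    ∀ t : ℝ, HasDerivAt (fun s => ∑ φ, pstar φ * Real.log (pstar φ / p s φ))
      ((∑ φ, p t φ * u t φ) - ∑ φ, pstar φ * u t φ) t := by
  intro t
  set ubar := ∑ φ', p t φ' * u t φ' with hubar
  have key : ∀ φ : Φ, HasDerivAt (fun s => pstar φ * Real.log (pstar φ / p s φ))
      (-(pstar φ * (u t φ - ubar))) t := by
    intro φ
    rcases eq_or_lt_of_le (hpstar_nonneg φ) with h0 | hpos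
    · simp only [← h0, zero_mul, neg_zero]
      exact hasDerivAt_const t 0
    · have hlog : HasDerivAt (fun s => Real.log (p s φ))
          (p t φ * (u t φ - ubar) / p t φ) t :=
        (hdyn t φ).log (hppos t φ).ne'
      have hlog' : HasDerivAt (fun s => Real.log (p s φ)) (u t φ - ubar) t := by
        have hc : p t φ * (u t φ - ubar) / p t φ = u t φ - ubar :=
          mul_div_cancel_left₀ _ (hppos t φ).ne'
        rw [← hc]
        exact hlog
      have heq : (fun s => pstar φ * Real.log (pstar φ / p s φ)) =
          fun s => pstar φ * (Real.log (pstar φ) - Real.log (p s φ)) := by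
        funext s
        rw [Real.log_div hpos.ne' (hppos s φ).ne']
      rw [heq]
      have := ((hasDerivAt_const t (Real.log (pstar φ))).sub hlog').const_mul (pstar φ)
      simpa [mul_comm, mul_sub] using this
  have hsum := HasDerivAt.fun_sum (fun φ (_ : φ ∈ Finset.univ) => key φ)
  have heq : (∑ φ : Φ, p t φ * u t φ) - ∑ φ : Φ, pstar φ * u t φ
      = ∑ φ : Φ, -(pstar φ * (u t φ - ubar)) := by
    simp only [neg_mul_eq_mul_neg, neg_sub, mul_sub, Finset.sum_sub_distrib,
      ← Finset.sum_mul, hpstar_sum, one_mul, hubar]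
  rw [heq]
  exact hsum
end
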